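/- For every n ≥ 2 there exist distinct points w_1, …, w_{n+1} ∈ ℂ, positive reals μ_1, …, μ_{n+1}, and a source ζ ∈ ℂ such that the zero-shear lensing map η(z) = z − Σ_{j=1}^{n+1} μ_j/(conj(z) − conj(w_j)) on ℂ \ {w_1, …, w_{n+1}} has exactly 5n images of ζ, i.e., the Khavinson–Neumann bound 5(n+1) − 5 = 5n is attained for every number n + 1 ≥ 3 of point masses. -/

import Mathlib

open Complex Finset

noncomputable def pom (N : ℕ) : ℂ := Complex.exp (2 * Real.pi * Complex.I / N)

lemma pom_prim {N : ℕ} (hN : N ≠ 0) : IsPrimitiveRoot (pom N) N :=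
  Complex.isPrimitiveRoot_exp N hN

lemma sum_pow_pom {N m : ℕ} (hN : N ≠ 0) (hm1 : 0 < m) (hm2 : m < N) :
    ∑ j ∈ range N, (pom N ^ m) ^ j = 0 := by
  have h1 : pom N ^ m ≠ 1 := (pom_prim hN).pow_ne_one_of_pos_of_lt hm1.ne' hm2
  rw [geom_sum_eq h1]
  have h2 : (pom N ^ m) ^ N = 1 := by
    rw [← pow_mul, mul_comm m N, pow_mul, (pom_prim hN).pow_eq_one, one_pow]
  simp [h2]

lemma sum_inv_eq {N : ℕ} (hN : N ≠ 0) (a : ℝ) {z : ℂ} (hz : z ^ N ≠ ((a : ℂ)) ^ N) :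
    ∑ j ∈ range N, (z - a * pom N ^ j)⁻¹ = N * z ^ (N - 1) / (z ^ N - (a : ℂ) ^ N) := by
  have hden : z ^ N - (a : ℂ) ^ N ≠ 0 := sub_ne_zero.mpr hz
  have key : ∀ j ∈ range N,
      (z - a * pom N ^ j)⁻¹ =
        (∑ i ∈ range N, z ^ i * ((a : ℂ) * pom N ^ j) ^ (N - 1 - i)) / (z ^ N - (a : ℂ) ^ N) := by
    intro j hj
    set c := (a : ℂ) * pom N ^ j with hc
    have hcN : c ^ N = (a : ℂ) ^ N := by
      rw [hc, mul_pow, ← pow_mul, mul_comm j N, pow_mul, (pom_prim hN).pow_eq_one, one_pow,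
        mul_one]
    have hmul : (∑ i ∈ range N, z ^ i * c ^ (N - 1 - i)) * (z - c) = z ^ N - (a : ℂ) ^ N := by
      rw [geom_sum₂_mul, hcN]
    have hzc : z - c ≠ 0 := fun h0 => hden (by rw [← hmul, h0, mul_zero])
    rw [eq_div_iff hden, ← hmul, mul_comm (∑ i ∈ range N, z ^ i * c ^ (N - 1 - i)) (z - c),
      ← mul_assoc, inv_mul_cancel₀ hzc, one_mul]
  rw [Finset.sum_congr rfl key, ← Finset.sum_div]
  congr 1
  rw [Finset.sum_comm]
  rw [Finset.sum_eq_single_of_mem (N - 1) (Finset.mem_range.mpr (by omega))]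
  · have : N - 1 - (N - 1) = 0 := by omega
    simp [this, mul_comm]
  · intro i hi hne
    have him : i < N := Finset.mem_range.mp hi
    have h1 : 0 < N - 1 - i := by omega
    have h2 : N - 1 - i < N := by omega
    have hterm : ∀ j, z ^ i * ((a : ℂ) * pom N ^ j) ^ (N - 1 - i)
        = (z ^ i * (a : ℂ) ^ (N - 1 - i)) * (pom N ^ (N - 1 - i)) ^ j := by
      intro j
      rw [mul_pow, ← pow_mul, ← pow_mul, mul_comm j (N - 1 - i)]
      ring
    simp_rw [hterm]
    rw [← Finset.mul_sum, sum_pow_pom hN h1 h2, mul_zero]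

lemma pow_eq_pow_iff {N : ℕ} (hN : N ≠ 0) {a : ℝ} (ha : 0 < a) {z : ℂ} :
    z ^ N = (a : ℂ) ^ N ↔ ∃ j < N, z = a * pom N ^ j := by
  constructor
  · intro h
    have ha' : (a : ℂ) ≠ 0 := ofReal_ne_zero.mpr ha.ne'
    have h1 : (z / a) ^ N = 1 := by
      rw [div_pow, h, div_self (pow_ne_zero _ ha')]
    haveI : NeZero N := ⟨hN⟩
    obtain ⟨j, hj, hj2⟩ := (pom_prim hN).eq_pow_of_pow_eq_one h1
    refine ⟨j, hj, ?_⟩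
    rw [hj2]
    field_simp
  · rintro ⟨j, hj, rfl⟩
    rw [mul_pow, ← pow_mul, mul_comm j N, pow_mul, (pom_prim hN).pow_eq_one, one_pow, mul_one]

lemma ratio_real {w : ℂ} {T b : ℝ} (hb : b ≠ 0) (h : (T : ℂ) = w / (w - b)) :
    ∃ s : ℝ, w = (s : ℂ) := by
  rcases eq_or_ne w (b : ℂ) with hw | hw
  · exact ⟨b, hw⟩
  · have hwb : w - (b : ℂ) ≠ 0 := sub_ne_zero.mpr hw
    have h2 : (T : ℂ) * (w - b) = w := by
      rw [h, div_mul_cancel₀ _ hwb]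
    have hT1 : (T : ℂ) ≠ 1 := by
      intro hT
      rw [hT, one_mul] at h2
      have : (b : ℂ) = 0 := by linear_combination -h2
      exact hb (by exact_mod_cast this)
    refine ⟨T * b / (T - 1), ?_⟩
    have hT1' : (T : ℂ) - 1 ≠ 0 := sub_ne_zero.mpr hT1
    push_cast
    rw [eq_div_iff hT1']
    linear_combination h2
def RPset (N : ℕ) (a M ε : ℝ) : Set ℝ := {r | 0 < r ∧ (r^2 - ε) * (r^N - a^N) = M * r^N}
def RMset (N : ℕ) (a M ε : ℝ) : Set ℝ := {r | 0 < r ∧ (r^2 - ε) * (r^N + a^N) = M * r^N}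
def SolSet (N : ℕ) (a M ε : ℝ) : Set ℂ :=
  {x | x ≠ 0 ∧ x ^ N ≠ ((a : ℂ)) ^ N ∧
    (starRingEnd ℂ) x * x = (M : ℂ) * x ^ N / (x ^ N - (a : ℂ) ^ N) + (ε : ℂ)}

lemma abs_one_of_pow {N : ℕ} (hN : N ≠ 0) {u : ℂ} (h : u ^ N = 1 ∨ u ^ N = -1) :
    ‖u‖ = 1 := by
  have h1 : ‖u‖ ^ N = 1 := by
    rcases h with h | h <;> rw [← norm_pow, h] <;> simp
  rcases lt_trichotomy (‖u‖) 1 with h2 | h2 | h2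
  · have := pow_lt_one₀ (norm_nonneg u) h2 hN
    simp [h1] at this
  · exact h2
  · have := one_lt_pow₀ h2 hN
    simp [h1] at this

lemma mem_SolSet_iff {N : ℕ} (hN : N ≠ 0) {a M ε : ℝ} (ha : 0 < a) (hM : 0 < M) {x : ℂ} :
    x ∈ SolSet N a M ε ↔
      ∃ r u, ((r ∈ RPset N a M ε ∧ u ^ N = 1) ∨ (r ∈ RMset N a M ε ∧ u ^ N = -1)) ∧
        x = (r : ℂ) * u := by
  have hb : (0:ℝ) < a ^ N := pow_pos ha N
  constructor
  · rintro ⟨hx0, hxN, heq⟩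
    set r : ℝ := ‖x‖ with hr
    have hrpos : 0 < r := norm_pos_iff.mpr hx0
    have hcx : (starRingEnd ℂ) x * x = ((r:ℂ)) ^ 2 := by
      rw [mul_comm, Complex.mul_conj, ← Complex.sq_norm]
      push_cast
      ring
    have hMne : (M : ℂ) ≠ 0 := Complex.ofReal_ne_zero.mpr hM.ne'
    have hDne : x ^ N - (a:ℂ)^N ≠ 0 := sub_ne_zero.mpr hxN
    have h1 : ((r:ℂ))^2 = (M:ℂ) * x^N/(x^N - (a:ℂ)^N) + ε := hcx.symm.trans heq
    have h2 : (M:ℂ) * x^N / (x^N - (a:ℂ)^N) = ((r:ℂ))^2 - ε := eq_sub_of_add_eq h1.symm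
    have h3 : (M:ℂ) * x^N = (((r:ℂ))^2 - ε) * (x^N - (a:ℂ)^N) := by
      rw [← h2, div_mul_cancel₀ _ hDne]
    have hQ : (((r^2 - ε)/M : ℝ) : ℂ) = x ^ N / (x ^ N - (a : ℂ) ^ N) := by
      rw [eq_div_iff hDne]
      push_cast
      rw [div_mul_eq_mul_div, div_eq_iff hMne]
      linear_combination -h3
    have haN : ((a : ℂ)) ^ N = ((a ^ N : ℝ) : ℂ) := by push_cast; ring
    obtain ⟨s, hs⟩ := ratio_real (w := x ^ N) (T := (r^2 - ε)/M) (b := a ^ N) hb.ne'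
      (by rw [haN] at hQ; exact hQ)
    set u : ℂ := x / (r : ℂ) with hu
    have hrne : (r : ℂ) ≠ 0 := Complex.ofReal_ne_zero.mpr hrpos.ne'
    have hxu : x = (r : ℂ) * u := by rw [hu, mul_div_cancel₀ _ hrne]
    have huN : u ^ N = (((s / r ^ N) : ℝ) : ℂ) := by
      rw [hu, div_pow, hs]
      push_cast
      ring
    have habs : ‖u‖ = 1 := by
      rw [hu, norm_div, Complex.norm_real, Real.norm_of_nonneg hrpos.le, ← hr, div_self hrpos.ne']
    have hc1 : |s / r ^ N| = 1 := by
      have := congrArg norm huN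
      rwa [norm_pow, habs, one_pow, Complex.norm_real, Real.norm_eq_abs, eq_comm] at this
    have hrNne : r ^ N ≠ a ^ N → True := fun _ => trivial
    rcases (abs_eq (by norm_num : (0:ℝ) ≤ 1)).mp hc1 with hc | hc
    · -- u^N = 1 case
      have huN1 : u ^ N = 1 := by rw [huN, hc]; norm_num
      have hxNr : x ^ N = ((r ^ N : ℝ) : ℂ) := by
        rw [hxu, mul_pow, huN1, mul_one]; push_cast; ring
      have hrN_ne : r ^ N ≠ a ^ N := by
        intro h
        apply hxN
        rw [hxNr, h, haN]
      have hreal : (r^2 - ε)/M = r ^ N / (r ^ N - a ^ N) := by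
        have := hQ
        rw [hxNr, haN] at this
        exact_mod_cast this
      have : (r^2 - ε) * (r ^ N - a ^ N) = M * r ^ N := by
        have hd : r ^ N - a ^ N ≠ 0 := sub_ne_zero.mpr hrN_ne
        field_simp at hreal
        linarith [hreal]
      exact ⟨r, u, Or.inl ⟨⟨hrpos, this⟩, huN1⟩, hxu⟩
    · -- u^N = -1 case
      have huN1 : u ^ N = -1 := by rw [huN, hc]; norm_num
      have hxNr : x ^ N = ((-(r ^ N) : ℝ) : ℂ) := by
        rw [hxu, mul_pow, huN1]; push_cast; ring
      have hreal : (r^2 - ε)/M = (-(r ^ N)) / ((-(r ^ N)) - a ^ N) := by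
        have := hQ
        rw [hxNr, haN] at this
        exact_mod_cast this
      have : (r^2 - ε) * (r ^ N + a ^ N) = M * r ^ N := by
        have hd : (-(r ^ N)) - a ^ N ≠ 0 := by nlinarith [pow_pos hrpos N]
        field_simp at hreal
        nlinarith [hreal]
      exact ⟨r, u, Or.inr ⟨⟨hrpos, this⟩, huN1⟩, hxu⟩
  · rintro ⟨r, u, hcase, rfl⟩
    have hrpos : 0 < r := by rcases hcase with ⟨⟨h, _⟩, _⟩ | ⟨⟨h, _⟩, _⟩ <;> exact h
    have habs : ‖u‖ = 1 := by
      apply abs_one_of_pow hN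
      rcases hcase with ⟨_, h⟩ | ⟨_, h⟩
      · exact Or.inl h
      · exact Or.inr h
    have hune : u ≠ 0 := by
      intro h; rw [h] at habs; simp at habs
    have hrne : (r : ℂ) ≠ 0 := Complex.ofReal_ne_zero.mpr hrpos.ne'
    have hx0 : (r : ℂ) * u ≠ 0 := mul_ne_zero hrne hune
    have hconj : (starRingEnd ℂ) ((r:ℂ) * u) * ((r:ℂ) * u) = ((r^2 : ℝ) : ℂ) := by
      have h1 : (starRingEnd ℂ) u * u = ((Complex.normSq u : ℝ) : ℂ) := by
        rw [mul_comm, Complex.mul_conj]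
      have h2 : Complex.normSq u = 1 := by
        rw [← Complex.sq_norm, habs]; norm_num
      rw [map_mul, Complex.conj_ofReal]
      push_cast
      rw [h2] at h1
      calc (r:ℂ) * (starRingEnd ℂ) u * ((r:ℂ) * u) = (r:ℂ)*(r:ℂ) * ((starRingEnd ℂ) u * u) := by ring
        _ = (r:ℂ)^2 := by rw [h1]; push_cast; ring
    rcases hcase with ⟨⟨_, heq⟩, huN⟩ | ⟨⟨_, heq⟩, huN⟩
    · have hrN_ne : r ^ N ≠ a ^ N := by
        intro h
        rw [h] at heq
        have h0 : (r^2 - ε) * (a^N - a^N) = 0 := by ring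
        rw [h0] at heq
        exact absurd heq.symm (by positivity)
      have hxN : ((r:ℂ) * u) ^ N = ((r ^ N : ℝ) : ℂ) := by
        rw [mul_pow, huN, mul_one]; push_cast; ring
      refine ⟨hx0, ?_, ?_⟩
      · rw [hxN]
        intro h
        have h' : ((r^N : ℝ) : ℂ) = ((a^N : ℝ) : ℂ) := by rw [h]; push_cast; ring
        exact hrN_ne (by exact_mod_cast h')
      · rw [hconj, hxN]
        have hd : r ^ N - a ^ N ≠ 0 := sub_ne_zero.mpr hrN_ne
        have hkey : r ^ 2 = M * r ^ N / (r ^ N - a ^ N) + ε := by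
          field_simp
          linarith [heq]
        rw [hkey]
        push_cast
        ring
    · have hxN : ((r:ℂ) * u) ^ N = ((-(r ^ N) : ℝ) : ℂ) := by
        rw [mul_pow, huN]; push_cast; ring
      have hd : (-(r ^ N)) - a ^ N ≠ 0 := by nlinarith [pow_pos hrpos N]
      refine ⟨hx0, ?_, ?_⟩
      · rw [hxN]
        intro h
        have h' : ((-(r^N) : ℝ) : ℂ) = ((a^N : ℝ) : ℂ) := by rw [h]; push_cast; ring
        have : -(r^N) = a ^ N := by exact_mod_cast h'
        nlinarith [pow_pos hrpos N]
      · rw [hconj, hxN]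
        have hkey : r ^ 2 = M * (-(r ^ N)) / ((-(r ^ N)) - a ^ N) + ε := by
          field_simp
          nlinarith [heq]
        rw [hkey]
        push_cast
        ring
noncomputable def UPf (N : ℕ) : Finset ℂ := (range N).image (fun j => pom N ^ j)
noncomputable def UMf (N : ℕ) : Finset ℂ :=
  (range N).image (fun j => Complex.exp (Real.pi * Complex.I / N) * pom N ^ j)

lemma eta_pow {N : ℕ} (hN : N ≠ 0) : Complex.exp (Real.pi * Complex.I / N) ^ N = -1 := by
  rw [← Complex.exp_nat_mul]
  have hNc : (N : ℂ) ≠ 0 := Nat.cast_ne_zero.mpr hN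
  have h : (N : ℂ) * (Real.pi * Complex.I / N) = Real.pi * Complex.I := by
    field_simp
  rw [h, Complex.exp_pi_mul_I]

lemma mem_UPf {N : ℕ} (hN : N ≠ 0) {u : ℂ} : u ∈ UPf N ↔ u ^ N = 1 := by
  constructor
  · intro hu
    obtain ⟨j, hj, rfl⟩ := Finset.mem_image.mp hu
    rw [← pow_mul, mul_comm j N, pow_mul, (pom_prim hN).pow_eq_one, one_pow]
  · intro hu
    have h1 : u ^ N = ((1:ℝ):ℂ) ^ N := by rw [hu]; norm_num
    obtain ⟨j, hj, hj2⟩ := (pow_eq_pow_iff hN one_pos).mp h1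
    exact Finset.mem_image.mpr ⟨j, Finset.mem_range.mpr hj, by rw [hj2]; norm_num⟩

lemma mem_UMf {N : ℕ} (hN : N ≠ 0) {u : ℂ} : u ∈ UMf N ↔ u ^ N = -1 := by
  have hexp : Complex.exp (Real.pi * Complex.I / N) ≠ 0 := Complex.exp_ne_zero _
  constructor
  · intro hu
    obtain ⟨j, hj, rfl⟩ := Finset.mem_image.mp hu
    rw [mul_pow, eta_pow hN, ← pow_mul, mul_comm j N, pow_mul, (pom_prim hN).pow_eq_one, one_pow,
      mul_one]
  · intro hu
    have h1 : (u / Complex.exp (Real.pi * Complex.I / N)) ^ N = ((1:ℝ):ℂ) ^ N := by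
      rw [div_pow, eta_pow hN, hu]
      norm_num
    obtain ⟨j, hj, hj2⟩ := (pow_eq_pow_iff hN one_pos).mp h1
    refine Finset.mem_image.mpr ⟨j, Finset.mem_range.mpr hj, ?_⟩
    have : u / Complex.exp (Real.pi * Complex.I / N) = pom N ^ j := by
      rw [hj2]; norm_num
    field_simp at this
    rw [this]

lemma card_UPf {N : ℕ} (hN : N ≠ 0) : (UPf N).card = N := by
  rw [UPf, Finset.card_image_of_injOn, Finset.card_range]
  intro i hi j hj hij
  exact (pom_prim hN).pow_inj (Finset.mem_range.mp hi) (Finset.mem_range.mp hj) hij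

lemma card_UMf {N : ℕ} (hN : N ≠ 0) : (UMf N).card = N := by
  rw [UMf, Finset.card_image_of_injOn, Finset.card_range]
  intro i hi j hj hij
  have hexp : Complex.exp (Real.pi * Complex.I / N) ≠ 0 := Complex.exp_ne_zero _
  exact (pom_prim hN).pow_inj (Finset.mem_range.mp hi) (Finset.mem_range.mp hj)
    (mul_left_cancel₀ hexp hij)

lemma SolSet_card {N : ℕ} (hN : N ≠ 0) {a M ε : ℝ} (ha : 0 < a) (hM : 0 < M)
    {RPf RMf : Finset ℝ} (hRP : RPset N a M ε = ↑RPf) (hRM : RMset N a M ε = ↑RMf) :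
    (SolSet N a M ε).Finite ∧ (SolSet N a M ε).ncard = N * RPf.card + N * RMf.card := by
  classical
  set F : Finset ℂ := ((RPf ×ˢ UPf N) ∪ (RMf ×ˢ UMf N)).image
    (fun p : ℝ × ℂ => (p.1 : ℂ) * p.2) with hF
  -- membership characterization of the union
  have hmem : ∀ p : ℝ × ℂ, p ∈ (RPf ×ˢ UPf N) ∪ (RMf ×ˢ UMf N) ↔
      ((p.1 ∈ RPset N a M ε ∧ p.2 ^ N = 1) ∨ (p.1 ∈ RMset N a M ε ∧ p.2 ^ N = -1)) := by
    intro p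
    rw [Finset.mem_union, Finset.mem_product, Finset.mem_product, mem_UPf hN, mem_UMf hN,
      ← Finset.mem_coe, ← Finset.mem_coe (s := RMf), ← hRP, ← hRM]
  have hset : SolSet N a M ε = ↑F := by
    ext x
    rw [mem_SolSet_iff hN ha hM]
    simp only [hF, Finset.coe_image, Set.mem_image, Finset.mem_coe]
    constructor
    · rintro ⟨r, u, h, rfl⟩
      exact ⟨(r, u), (hmem (r, u)).mpr h, rfl⟩
    · rintro ⟨⟨r, u⟩, h, rfl⟩
      exact ⟨r, u, (hmem (r, u)).mp h, rfl⟩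
  have hpos_abs : ∀ p : ℝ × ℂ, p ∈ (RPf ×ˢ UPf N) ∪ (RMf ×ˢ UMf N) →
      0 < p.1 ∧ ‖p.2‖ = 1 := by
    intro p hp
    rcases (hmem p).mp hp with ⟨⟨h1, _⟩, h2⟩ | ⟨⟨h1, _⟩, h2⟩
    · exact ⟨h1, abs_one_of_pow hN (Or.inl h2)⟩
    · exact ⟨h1, abs_one_of_pow hN (Or.inr h2)⟩
  have hinj : Set.InjOn (fun p : ℝ × ℂ => (p.1 : ℂ) * p.2)
      ↑((RPf ×ˢ UPf N) ∪ (RMf ×ˢ UMf N)) := by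
    rintro ⟨r, u⟩ hp ⟨r', u'⟩ hq h
    simp only [Finset.mem_coe] at hp hq
    obtain ⟨hr, hu⟩ := hpos_abs _ hp
    obtain ⟨hr', hu'⟩ := hpos_abs _ hq
    simp only at h hr hr' hu hu'
    have habs : r = r' := by
      have := congrArg norm h
      simpa [Complex.norm_real, abs_of_pos hr, abs_of_pos hr', hu, hu'] using this
    have hrne : (r : ℂ) ≠ 0 := Complex.ofReal_ne_zero.mpr hr.ne'
    have : u = u' := by
      rw [habs] at h
      exact mul_left_cancel₀ (Complex.ofReal_ne_zero.mpr hr'.ne') h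
    simp [habs, this]
  have hdisj : Disjoint (RPf ×ˢ UPf N) (RMf ×ˢ UMf N) := by
    rw [Finset.disjoint_left]
    rintro ⟨r, u⟩ h1 h2
    have e1 : u ^ N = 1 := (mem_UPf hN).mp (Finset.mem_product.mp h1).2
    have e2 : u ^ N = -1 := (mem_UMf hN).mp (Finset.mem_product.mp h2).2
    rw [e1] at e2
    norm_num at e2
  have hcard : F.card = N * RPf.card + N * RMf.card := by
    rw [hF, Finset.card_image_of_injOn hinj, Finset.card_union_of_disjoint hdisj,
      Finset.card_product, Finset.card_product, card_UPf hN, card_UMf hN]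
    ring
  rw [hset]
  exact ⟨F.finite_toSet, by rw [Set.ncard_coe_finset, hcard]⟩
def qeq (N : ℕ) (a M ε r : ℝ) : Prop := (r^2 - ε) * (r^N - a^N) = M * r^N

lemma Dmono {N : ℕ} {a M ε : ℝ} (hN : N ≠ 0) (ha : 0 < a) (hM : 0 < M) :
    StrictMonoOn (fun r => r^2 - ε - M + M*a^N/(a^N - r^N)) (Set.Ico 0 a) := by
  intro x hx y hy hxy
  have h1 : x^2 < y^2 := pow_lt_pow_left₀ hxy hx.1 (by norm_num)
  have hyN : y^N < a^N := pow_lt_pow_left₀ hy.2 (le_trans hx.1 hxy.le) hN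
  have hxN : x^N < y^N := pow_lt_pow_left₀ hxy hx.1 hN
  have h2 : M*a^N/(a^N - x^N) < M*a^N/(a^N - y^N) :=
    div_lt_div_of_pos_left (by positivity) (by linarith) (by linarith)
  simp only
  linarith

lemma Emono {N : ℕ} {a M ε : ℝ} (hN : N ≠ 0) (ha : 0 < a) (hM : 0 < M) :
    StrictMonoOn (fun r => r^2 - ε - M - M*a^N/(r^N - a^N)) (Set.Ioi a) := by
  intro x hx y hy hxy
  simp only [Set.mem_Ioi] at hx hy
  have hxpos : 0 < x := lt_trans ha hx
  have h1 : x^2 < y^2 := pow_lt_pow_left₀ hxy hxpos.le (by norm_num)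
  have hxN : a^N < x^N := pow_lt_pow_left₀ hx ha.le hN
  have hyN : x^N < y^N := pow_lt_pow_left₀ hxy hxpos.le hN
  have h2 : M*a^N/(y^N - a^N) < M*a^N/(x^N - a^N) :=
    div_lt_div_of_pos_left (by positivity) (by linarith) (by linarith)
  simp only
  linarith

lemma qroot_D {N : ℕ} {a M ε : ℝ} (hN : N ≠ 0) {r : ℝ} (hr : r ∈ Set.Ico 0 a)
    (h : qeq N a M ε r) : r^2 - ε - M + M*a^N/(a^N - r^N) = 0 := by
  have hrN : r^N < a^N := pow_lt_pow_left₀ hr.2 hr.1 hN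
  have hne : a^N - r^N ≠ 0 := by linarith
  have key : (r^2 - ε - M + M*a^N/(a^N - r^N)) * (a^N - r^N)
      = M*r^N - (r^2-ε)*(r^N - a^N) := by
    field_simp
    ring
  have h0 : (r^2 - ε - M + M*a^N/(a^N - r^N)) * (a^N - r^N) = 0 := by
    rw [key, h]; ring
  rcases mul_eq_zero.mp h0 with h' | h'
  · exact h'
  · exact absurd h' hne

lemma qroot_E {N : ℕ} {a M ε : ℝ} (hN : N ≠ 0) (ha : 0 < a) {r : ℝ} (hr : r ∈ Set.Ioi a)
    (h : qeq N a M ε r) : r^2 - ε - M - M*a^N/(r^N - a^N) = 0 := by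
  simp only [Set.mem_Ioi] at hr
  have hrN : a^N < r^N := pow_lt_pow_left₀ hr ha.le hN
  have hne : r^N - a^N ≠ 0 := by linarith
  have key : (r^2 - ε - M - M*a^N/(r^N - a^N)) * (r^N - a^N)
      = (r^2-ε)*(r^N - a^N) - M*r^N := by
    field_simp
    ring
  have h0 : (r^2 - ε - M - M*a^N/(r^N - a^N)) * (r^N - a^N) = 0 := by
    rw [key, h]; ring
  rcases mul_eq_zero.mp h0 with h' | h'
  · exact h'
  · exact absurd h' hne

lemma q_unique_small {N : ℕ} {a M ε : ℝ} (hN : N ≠ 0) (ha : 0 < a) (hM : 0 < M)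
    {x y : ℝ} (hx : x ∈ Set.Ioo 0 a) (hy : y ∈ Set.Ioo 0 a)
    (h1 : qeq N a M ε x) (h2 : qeq N a M ε y) : x = y := by
  have hx' : x ∈ Set.Ico 0 a := ⟨hx.1.le, hx.2⟩
  have hy' : y ∈ Set.Ico 0 a := ⟨hy.1.le, hy.2⟩
  exact (Dmono hN ha hM).injOn hx' hy' (by rw [qroot_D hN hx' h1, qroot_D hN hy' h2])

lemma q_none_small {N : ℕ} {a M : ℝ} (hN : N ≠ 0) (ha : 0 < a) (hM : 0 < M)
    {x : ℝ} (hx : x ∈ Set.Ioo 0 a) : ¬ qeq N a M 0 x := by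
  intro h
  have hx' : x ∈ Set.Ico 0 a := ⟨hx.1.le, hx.2⟩
  have h0 : (0:ℝ) ∈ Set.Ico 0 a := ⟨le_refl 0, ha⟩
  have hD0 : (0:ℝ)^2 - 0 - M + M*a^N/(a^N - 0^N) = 0 := by
    rw [zero_pow hN]
    have : a^N ≠ 0 := (pow_pos ha N).ne'
    field_simp
    ring
  have := Dmono (ε := 0) hN ha hM h0 hx' hx.1
  simp only at this
  rw [hD0, qroot_D hN hx' h] at this
  exact lt_irrefl 0 this

lemma q_unique_big {N : ℕ} {a M ε : ℝ} (hN : N ≠ 0) (ha : 0 < a) (hM : 0 < M)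
    {x y : ℝ} (hx : x ∈ Set.Ioi a) (hy : y ∈ Set.Ioi a)
    (h1 : qeq N a M ε x) (h2 : qeq N a M ε y) : x = y :=
  (Emono hN ha hM).injOn hx hy (by rw [qroot_E hN ha hx h1, qroot_E hN ha hy h2])

lemma q_not_at_a {N : ℕ} {a M ε : ℝ} (ha : 0 < a) (hM : 0 < M) : ¬ qeq N a M ε a := by
  intro h
  unfold qeq at h
  rw [sub_self, mul_zero] at h
  exact absurd h.symm (by positivity)
lemma four_cases {P : ℝ → Prop} {y1 y2 y3 r : ℝ} (h1 : 0 < y1) (h12 : y1 < y2)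
    (h23 : y2 < y3) (hr : 0 < r) (hne1 : r ≠ y1) (hne2 : r ≠ y2) (hne3 : r ≠ y3)
    (key : ∀ r1 r2 r3 r4 : ℝ, 0 < r1 → r1 < r2 → r2 < r3 → r3 < r4 →
      P r1 → P r2 → P r3 → P r4 → False)
    (hy1 : P y1) (hy2 : P y2) (hy3 : P y3) (hrP : P r) : False := by
  rcases lt_trichotomy r y1 with h | h | h
  · exact key r y1 y2 y3 hr h h12 h23 hrP hy1 hy2 hy3
  · exact hne1 h
  rcases lt_trichotomy r y2 with h' | h' | h'
  · exact key y1 r y2 y3 h1 h h' h23 hy1 hrP hy2 hy3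
  · exact hne2 h'
  rcases lt_trichotomy r y3 with h'' | h'' | h''
  · exact key y1 y2 r y3 h1 h12 h' h'' hy1 hy2 hrP hy3
  · exact hne3 h''
  · exact key y1 y2 y3 r h1 h12 h23 h'' hy1 hy2 hy3 hrP

set_option maxHeartbeats 1000000 in
lemma rhie_p_four {n : ℕ} (hn : 3 ≤ n) {ε b : ℝ} :
    ∀ r1 r2 r3 r4 : ℝ, 0 < r1 → r1 < r2 → r2 < r3 → r3 < r4 →
      (r1^2 - ε) * (r1^n + b) - r1^n = 0 →
      (r2^2 - ε) * (r2^n + b) - r2^n = 0 →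
      (r3^2 - ε) * (r3^n + b) - r3^n = 0 →
      (r4^2 - ε) * (r4^n + b) - r4^n = 0 → False := by
  intro r1 r2 r3 r4 h0 h12 h23 h34 e1 e2 e3 e4
  set f : ℝ → ℝ := fun r => r ^ (n:ℤ) - (1+ε) * r ^ ((n:ℤ)-2) + b - ε*b * r ^ (-2:ℤ) with hf
  -- p roots are f roots
  have hfzero : ∀ r : ℝ, 0 < r → (r^2 - ε) * (r^n + b) - r^n = 0 → f r = 0 := by
    intro r hr he
    have hrne : r ≠ 0 := hr.ne'
    have e1' : r ^ (n:ℤ) = r ^ n := zpow_natCast r n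
    have e2' : r ^ ((n:ℤ)-2) = r ^ (n-2) := by
      rw [show (n:ℤ)-2 = ((n-2 : ℕ) : ℤ) by omega, zpow_natCast]
    have e3' : r ^ (-2:ℤ) = (r^2)⁻¹ := by
      rw [show (-2:ℤ) = -((2:ℕ):ℤ) by norm_num, zpow_neg, zpow_natCast]
    have e4' : r ^ (n-2) * r ^ 2 = r ^ n := by
      rw [← pow_add]; congr 1; omega
    have h2 : r^2 ≠ 0 := pow_ne_zero 2 hrne
    have e5' : r^2 * (r^2)⁻¹ = 1 := mul_inv_cancel₀ h2
    have key : r^2 * f r = (r^2 - ε) * (r^n + b) - r^n := by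
      rw [hf]; simp only
      rw [e1', e2', e3']
      linear_combination (-(1+ε)) * e4' - (ε*b) * e5'
    have : r^2 * f r = 0 := by rw [key, he]
    rcases mul_eq_zero.mp this with h' | h'
    · exact absurd h' h2
    · exact h'
  -- derivative of f
  have hd : ∀ c : ℝ, c ≠ 0 → HasDerivAt f
      ((n:ℝ) * c ^ ((n:ℤ)-1) - (1+ε) * (((n:ℝ)-2) * c ^ ((n:ℤ)-3)) + 2*(ε*b) * c ^ (-3:ℤ)) c := by
    intro c hc
    have H := (((hasDerivAt_zpow (n:ℤ) c (Or.inl hc)).sub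
      ((hasDerivAt_zpow ((n:ℤ)-2) c (Or.inl hc)).const_mul (1+ε))).add_const b).sub
      ((hasDerivAt_zpow (-2:ℤ) c (Or.inl hc)).const_mul (ε*b))
    rw [hf]
    refine H.congr_deriv ?_
    rw [show ((n:ℤ)-2-1) = (n:ℤ)-3 from by ring, show ((-2:ℤ)-1) = (-3:ℤ) from by norm_num]
    push_cast
    ring
  have hcont : ∀ x y : ℝ, 0 < x → ContinuousOn f (Set.Icc x y) := by
    intro x y hx t ht
    exact ((hd t (lt_of_lt_of_le hx ht.1).ne').continuousAt).continuousWithinAt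
  -- Rolle three times
  obtain ⟨c1, hc1mem, hc1⟩ := exists_deriv_eq_zero h12 (hcont r1 r2 h0)
    (by rw [hfzero r1 h0 e1, hfzero r2 (h0.trans h12) e2])
  obtain ⟨c2, hc2mem, hc2⟩ := exists_deriv_eq_zero h23 (hcont r2 r3 (h0.trans h12))
    (by rw [hfzero r2 (h0.trans h12) e2, hfzero r3 ((h0.trans h12).trans h23) e3])
  obtain ⟨c3, hc3mem, hc3⟩ := exists_deriv_eq_zero h34 (hcont r3 r4 ((h0.trans h12).trans h23))
    (by rw [hfzero r3 ((h0.trans h12).trans h23) e3,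
            hfzero r4 (((h0.trans h12).trans h23).trans h34) e4])
  set g : ℝ → ℝ := fun c => (n:ℝ) * c^(n+2) - (1+ε)*((n:ℝ)-2) * c^n + 2*(ε*b) with hg
  -- deriv f zero implies g zero
  have hgzero : ∀ c : ℝ, 0 < c → deriv f c = 0 → g c = 0 := by
    intro c hc hdc
    have hcne : c ≠ 0 := hc.ne'
    have hval : (n:ℝ) * c ^ ((n:ℤ)-1) - (1+ε) * (((n:ℝ)-2) * c ^ ((n:ℤ)-3))
        + 2*(ε*b) * c ^ (-3:ℤ) = 0 := by
      rw [← (hd c hcne).deriv]; exact hdc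
    have hzp : ∀ m : ℤ, c ^ (3:ℕ) * c ^ m = c ^ (m + 3) := by
      intro m
      rw [← zpow_natCast c 3, ← zpow_add₀ hcne]
      congr 1
      omega
    have k1 : c ^ (3:ℕ) * c ^ ((n:ℤ)-1) = c ^ (n+2) := by
      rw [hzp, show (n:ℤ)-1+3 = ((n+2 : ℕ) : ℤ) by omega, zpow_natCast]
    have k2 : c ^ (3:ℕ) * c ^ ((n:ℤ)-3) = c ^ n := by
      rw [hzp, show (n:ℤ)-3+3 = ((n : ℕ) : ℤ) by omega, zpow_natCast]
    have k3 : c ^ (3:ℕ) * c ^ (-3:ℤ) = 1 := by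
      rw [hzp, show (-3:ℤ)+3 = (0:ℤ) by norm_num, zpow_zero]
    rw [hg]; simp only
    linear_combination (c^(3:ℕ)) * hval - ((n:ℝ)) * k1 + ((1:ℝ)+ε)*((n:ℝ)-2) * k2 - 2*(ε*b) * k3
  have hc1pos : 0 < c1 := h0.trans hc1mem.1
  have hc2pos : 0 < c2 := (h0.trans h12).trans hc2mem.1
  have hc3pos : 0 < c3 := ((h0.trans h12).trans h23).trans hc3mem.1
  have hc12 : c1 < c2 := hc1mem.2.trans hc2mem.1
  have hc23 : c2 < c3 := hc2mem.2.trans hc3mem.1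
  have hg1 : g c1 = 0 := hgzero c1 hc1pos hc1
  have hg2 : g c2 = 0 := hgzero c2 hc2pos hc2
  have hg3 : g c3 = 0 := hgzero c3 hc3pos hc3
  -- Rolle on g twice
  have hgd : ∀ d : ℝ, HasDerivAt g
      ((n:ℝ) * (((n+2:ℕ)) * d^(n+1)) - (1+ε)*((n:ℝ)-2) * ((n:ℕ) * d^(n-1))) d := by
    intro d
    have h1 : HasDerivAt (fun c : ℝ => c ^ (n+2)) (((n+2:ℕ)) * d^(n+1)) d := by
      simpa using hasDerivAt_pow (n+2) d
    have h2 : HasDerivAt (fun c : ℝ => c ^ n) (((n:ℕ)) * d^(n-1)) d := hasDerivAt_pow n d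
    exact ((h1.const_mul (n:ℝ)).sub (h2.const_mul ((1+ε)*((n:ℝ)-2)))).add_const (2*(ε*b))
  have hgcont : ∀ x y : ℝ, ContinuousOn g (Set.Icc x y) := by
    intro x y t ht
    exact (hgd t).continuousAt.continuousWithinAt
  obtain ⟨d1, hd1mem, hd1⟩ := exists_deriv_eq_zero hc12 (hgcont c1 c2) (by rw [hg1, hg2])
  obtain ⟨d2, hd2mem, hd2⟩ := exists_deriv_eq_zero hc23 (hgcont c2 c3) (by rw [hg2, hg3])
  have hd1pos : 0 < d1 := hc1pos.trans hd1mem.1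
  have hd2pos : 0 < d2 := hc2pos.trans hd2mem.1
  have hd12 : d1 < d2 := hd1mem.2.trans hd2mem.1
  -- extract d^2 equation
  have hsq : ∀ d : ℝ, 0 < d → deriv g d = 0 →
      (n:ℝ)*((n:ℝ)+2)*d^2 = (1+ε)*((n:ℝ)-2)*(n:ℝ) := by
    intro d hd0 hder
    have hval : (n:ℝ) * (((n+2:ℕ)) * d^(n+1)) - (1+ε)*((n:ℝ)-2) * ((n:ℕ) * d^(n-1)) = 0 := by
      rw [← (hgd d).deriv]; exact hder
    have hpow : d^(n+1) = d^(n-1) * d^2 := by rw [← pow_add]; congr 1; omega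
    have hdn : d^(n-1) ≠ 0 := pow_ne_zero _ hd0.ne'
    rw [hpow] at hval
    push_cast at hval
    have : ((n:ℝ)*((n:ℝ)+2)*d^2 - (1+ε)*((n:ℝ)-2)*(n:ℝ)) * d^(n-1) = 0 := by
      linear_combination hval
    rcases mul_eq_zero.mp this with h' | h'
    · linarith [h']
    · exact absurd h' hdn
  have hs1 := hsq d1 hd1pos hd1
  have hs2 := hsq d2 hd2pos hd2
  have hnpos : (0:ℝ) < (n:ℝ)*((n:ℝ)+2) := by
    have : (3:ℝ) ≤ (n:ℝ) := by exact_mod_cast hn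
    nlinarith
  have hsqlt : d1^2 < d2^2 := by nlinarith
  have hlt : (n:ℝ)*((n:ℝ)+2)*d1^2 < (n:ℝ)*((n:ℝ)+2)*d2^2 :=
    mul_lt_mul_of_pos_left hsqlt hnpos
  linarith [hs1, hs2, hlt]

lemma cubic_three : ∀ z1 z2 z3 : ℝ, 0 < z1 → z1 < z2 → z2 < z3 →
    z1^3 - 3*z1 + 1 = 0 → z2^3 - 3*z2 + 1 = 0 → z3^3 - 3*z3 + 1 = 0 → False := by
  intro z1 z2 z3 h0 h12 h23 e1 e2 e3
  set f : ℝ → ℝ := fun r => r^3 - 3*r + 1 with hf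
  have hd : ∀ d : ℝ, HasDerivAt f (3*d^2 - 3) d := by
    intro d
    have h1 : HasDerivAt (fun r : ℝ => r^3) (3*d^2) d := by simpa using hasDerivAt_pow 3 d
    have h2 : HasDerivAt (fun r : ℝ => 3*r) 3 d := by
      simpa using (hasDerivAt_id d).const_mul (3:ℝ)
    exact (h1.sub h2).add_const 1
  have hcont : ∀ x y : ℝ, ContinuousOn f (Set.Icc x y) := by
    intro x y t ht
    exact (hd t).continuousAt.continuousWithinAt
  obtain ⟨d1, hd1mem, hd1⟩ := exists_deriv_eq_zero h12 (hcont z1 z2) (by rw [hf]; simp only; rw [e1, e2])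
  obtain ⟨d2, hd2mem, hd2⟩ := exists_deriv_eq_zero h23 (hcont z2 z3) (by rw [hf]; simp only; rw [e2, e3])
  have hone : ∀ d : ℝ, 0 < d → deriv f d = 0 → d = 1 := by
    intro d hd0 hder
    have hval : 3*d^2 - 3 = 0 := by rw [← (hd d).deriv]; exact hder
    have hfac : (d-1)*(d+1) = 0 := by nlinarith
    rcases mul_eq_zero.mp hfac with h' | h'
    · linarith
    · linarith
  have h1 : d1 = 1 := hone d1 (h0.trans hd1mem.1) hd1
  have h2 : d2 = 1 := hone d2 ((h0.trans h12).trans hd2mem.1) hd2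
  have : d1 < d2 := hd1mem.2.trans hd2mem.1
  rw [h1, h2] at this
  exact lt_irrefl 1 this
section Rhie
variable {n : ℕ}

lemma rhie_eps_pos (n : ℕ) : (0:ℝ) < (1/2)^(4*n) := by positivity

lemma rhie_RP (hn : 3 ≤ n) : ∃ x₁ x₂ : ℝ, x₁ ≠ x₂ ∧
    RPset n (1/2) 1 ((1/2)^(4*n)) = ↑({x₁, x₂} : Finset ℝ) := by
  have hn0 : n ≠ 0 := by omega
  set ε : ℝ := (1/2)^(4*n) with hε
  set b : ℝ := (1/2:ℝ)^n with hb
  have hεpos : 0 < ε := by positivity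
  have hbpos : 0 < b := by positivity
  set Q : ℝ → ℝ := fun r => (r^2 - ε)*(r^n - b) - r^n with hQ
  have hQval : ∀ r : ℝ, Q r = (r^2 - ε)*(r^n - b) - r^n := fun r => rfl
  have hQcont : Continuous Q := by
    apply Continuous.sub
    · exact (((continuous_pow 2).sub continuous_const).mul
        ((continuous_pow n).sub continuous_const))
    · exact continuous_pow n
  have hQ0 : 0 < Q 0 := by
    have : Q 0 = ε * b := by rw [hQval 0, zero_pow hn0]; ring
    rw [this]; positivity
  have hQa : Q (1/2) < 0 := by
    have : Q (1/2) = -b := by rw [hQval, ← hb]; ring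
    rw [this]; linarith
  have h2n : (8:ℝ) ≤ 2^n := by
    calc (8:ℝ) = 2^3 := by norm_num
    _ ≤ 2^n := pow_le_pow_right₀ (by norm_num) hn
  have hε1 : ε ≤ 1/8 := by
    calc ε ≤ (1/2:ℝ)^3 := pow_le_pow_of_le_one (by norm_num) (by norm_num) (by omega)
    _ = 1/8 := by norm_num
  have hb1 : b ≤ 1/8 := by
    calc b ≤ (1/2:ℝ)^3 := pow_le_pow_of_le_one (by norm_num) (by norm_num) hn
    _ = 1/8 := by norm_num
  have hQ2 : 0 < Q 2 := by
    rw [hQval]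
    have hm : ε * 2^n ≤ (1/8) * 2^n :=
      mul_le_mul_of_nonneg_right hε1 (by positivity)
    nlinarith [h2n, hb1, hεpos, hbpos, hm]
  obtain ⟨x₁, hx₁mem, hx₁⟩ := intermediate_value_Ioo' (by norm_num : (0:ℝ) ≤ 1/2)
    hQcont.continuousOn ⟨hQa, hQ0⟩
  obtain ⟨x₂, hx₂mem, hx₂⟩ := intermediate_value_Ioo (by norm_num : (1/2:ℝ) ≤ 2)
    hQcont.continuousOn ⟨hQa, hQ2⟩
  have hQ_qeq : ∀ r : ℝ, Q r = 0 ↔ qeq n (1/2) 1 ε r := by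
    intro r
    unfold qeq
    rw [hQval, ← hb]
    constructor
    · intro h; linarith [h]
    · intro h; linarith [h]
  refine ⟨x₁, x₂, by
    intro h
    rw [h] at hx₁mem
    exact absurd (hx₁mem.2.trans hx₂mem.1) (lt_irrefl _), ?_⟩
  ext r
  simp only [RPset, Set.mem_setOf_eq, Finset.coe_insert, Finset.coe_singleton,
    Set.mem_insert_iff, Set.mem_singleton_iff]
  rw [← hb]
  constructor
  · rintro ⟨hr, heq⟩
    have hqeq : qeq n (1/2) 1 ε r := by unfold qeq; rw [← hb]; exact heq
    rcases lt_trichotomy r (1/2 : ℝ) with h | h | h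
    · left
      exact q_unique_small hn0 (by norm_num) (by norm_num) ⟨hr, h⟩ hx₁mem
        hqeq ((hQ_qeq x₁).mp hx₁)
    · exfalso
      rw [h] at hqeq
      exact q_not_at_a (by norm_num) (by norm_num) hqeq
    · right
      exact q_unique_big hn0 (by norm_num) (by norm_num) h hx₂mem.1 hqeq
        ((hQ_qeq x₂).mp hx₂)
  · rintro (rfl | rfl)
    · exact ⟨hx₁mem.1, (hQ_qeq r).mp hx₁⟩
    · exact ⟨lt_trans (by norm_num) hx₂mem.1, (hQ_qeq r).mp hx₂⟩

lemma rhie_RM (hn : 3 ≤ n) : ∃ y₁ y₂ y₃ : ℝ, y₁ ≠ y₂ ∧ y₁ ≠ y₃ ∧ y₂ ≠ y₃ ∧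
    RMset n (1/2) 1 ((1/2)^(4*n)) = ↑({y₁, y₂, y₃} : Finset ℝ) := by
  have hn0 : n ≠ 0 := by omega
  set ε : ℝ := (1/2)^(4*n) with hε
  set b : ℝ := (1/2:ℝ)^n with hb
  have hεpos : 0 < ε := by positivity
  have hbpos : 0 < b := by positivity
  set t1 : ℝ := (1/2:ℝ)^(2*n-1) with ht1
  have ht1pos : 0 < t1 := by positivity
  have ht1lt : t1 < 3/4 := by
    calc t1 ≤ (1/2:ℝ)^5 := pow_le_pow_of_le_one (by norm_num) (by norm_num) (by omega)
    _ < 3/4 := by norm_num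
  set P : ℝ → ℝ := fun r => (r^2 - ε)*(r^n + b) - r^n with hP
  have hPval : ∀ r : ℝ, P r = (r^2 - ε)*(r^n + b) - r^n := fun r => rfl
  have hPcont : Continuous P := by
    apply Continuous.sub
    · exact (((continuous_pow 2).sub continuous_const).mul
        ((continuous_pow n).add continuous_const))
    · exact continuous_pow n
  have hP0 : P 0 < 0 := by
    have h0 : P 0 = -(ε * b) := by rw [hPval 0, zero_pow hn0]; ring
    rw [h0]
    nlinarith [mul_pos hεpos hbpos]
  have hPt1 : 0 < P t1 := by
    have e1 : t1^2 = (1/2:ℝ)^(4*n-2) := by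
      rw [ht1, ← pow_mul]
      congr 1
      omega
    have e2 : (1/2:ℝ)^(4*n-2) * (1/4) = ε := by
      rw [hε, show (1/4:ℝ) = (1/2:ℝ)^2 from by norm_num, ← pow_add]
      congr 1
      omega
    have hsq : t1^2 - ε = 3*ε := by rw [e1, ← e2]; ring
    have ht1n : t1^n ≤ (1/2:ℝ)^(5*n) := by
      rw [ht1, ← pow_mul]
      exact pow_le_pow_of_le_one (by norm_num) (by norm_num)
        (Nat.mul_le_mul_right n (by omega))
    have hεb : ε * b = (1/2:ℝ)^(5*n) := by
      rw [hε, hb, ← pow_add]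
      congr 1
      omega
    have h5pos : (0:ℝ) < (1/2:ℝ)^(5*n) := by positivity
    have ht1npos : 0 < t1^n := by positivity
    have hv : P t1 = (3*ε)*(t1^n + b) - t1^n := by rw [hPval, hsq]
    rw [hv]
    nlinarith [hεpos, ht1npos, hεb, ht1n, h5pos]
  have hP34 : P (3/4) < 0 := by
    have h34pos : (0:ℝ) < (3/4:ℝ)^n := by positivity
    have h12pos : (0:ℝ) < (1/2:ℝ)^n := by positivity
    have hkey : (1/2:ℝ)^n ≤ (8/27) * (3/4)^n := by
      have h1 : (1/2:ℝ)^n = (2/3)^n * (3/4)^n := by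
        rw [← mul_pow]; norm_num
      have h2 : (2/3:ℝ)^n ≤ (2/3)^3 := pow_le_pow_of_le_one (by norm_num) (by norm_num) hn
      rw [h1]
      calc (2/3:ℝ)^n * (3/4)^n ≤ (2/3)^3 * (3/4)^n :=
            mul_le_mul_of_nonneg_right h2 h34pos.le
      _ = (8/27) * (3/4)^n := by norm_num
    rw [hPval, hb]
    nlinarith [hεpos, h34pos, h12pos, hkey]
  have hP2 : 0 < P 2 := by
    have h2n : (8:ℝ) ≤ 2^n := by
      calc (8:ℝ) = 2^3 := by norm_num
      _ ≤ 2^n := pow_le_pow_right₀ (by norm_num) hn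
    have hε1 : ε ≤ 1/8 := by
      calc ε ≤ (1/2:ℝ)^3 := pow_le_pow_of_le_one (by norm_num) (by norm_num) (by omega)
      _ = 1/8 := by norm_num
    rw [hPval]
    have hm : ε * 2^n ≤ (1/8) * 2^n := mul_le_mul_of_nonneg_right hε1 (by positivity)
    nlinarith [h2n, hεpos, hbpos, hm]
  obtain ⟨y₁, hy₁mem, hy₁⟩ := intermediate_value_Ioo (le_of_lt ht1pos)
    hPcont.continuousOn ⟨hP0, hPt1⟩
  obtain ⟨y₂, hy₂mem, hy₂⟩ := intermediate_value_Ioo' (le_of_lt ht1lt)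
    hPcont.continuousOn ⟨hP34, hPt1⟩
  obtain ⟨y₃, hy₃mem, hy₃⟩ := intermediate_value_Ioo (by norm_num : (3/4:ℝ) ≤ 2)
    hPcont.continuousOn ⟨hP34, hP2⟩
  have hy₁pos : 0 < y₁ := hy₁mem.1
  have hy12 : y₁ < y₂ := hy₁mem.2.trans hy₂mem.1
  have hy23 : y₂ < y₃ := hy₂mem.2.trans hy₃mem.1
  have key : ∀ r1 r2 r3 r4 : ℝ, 0 < r1 → r1 < r2 → r2 < r3 → r3 < r4 →
      P r1 = 0 → P r2 = 0 → P r3 = 0 → P r4 = 0 → False := by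
    intro r1 r2 r3 r4 a1 a2 a3 a4 b1 b2 b3 b4
    rw [hPval] at b1 b2 b3 b4
    exact rhie_p_four hn r1 r2 r3 r4 a1 a2 a3 a4 b1 b2 b3 b4
  refine ⟨y₁, y₂, y₃, hy12.ne, (hy12.trans hy23).ne, hy23.ne, ?_⟩
  ext r
  simp only [RMset, Set.mem_setOf_eq, Finset.coe_insert, Finset.coe_singleton,
    Set.mem_insert_iff, Set.mem_singleton_iff]
  rw [← hb]
  constructor
  · rintro ⟨hr, heq⟩
    have hPr : P r = 0 := by rw [hPval]; linarith [heq]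
    by_contra hcon
    push_neg at hcon
    exact four_cases hy₁pos hy12 hy23 hr hcon.1 hcon.2.1 hcon.2.2 key hy₁ hy₂ hy₃ hPr
  · have hmem : ∀ y : ℝ, 0 < y → P y = 0 → 0 < y ∧ (y^2 - ε)*(y^n + b) = 1*y^n := by
      intro y hy hPy
      rw [hPval] at hPy
      exact ⟨hy, by linarith [hPy]⟩
    rintro (rfl | rfl | rfl)
    · exact hmem r hy₁pos hy₁
    · exact hmem r (ht1pos.trans hy₂mem.1) hy₂
    · exact hmem r (by linarith [hy₃mem.1] : (0:ℝ) < r) hy₃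

end Rhie
lemma mpw_RP : ∃ x₁ : ℝ, RPset 3 1 3 0 = ↑({x₁} : Finset ℝ) := by
  set Q : ℝ → ℝ := fun r => (r^2 - 0)*(r^3 - (1:ℝ)^3) - 3*r^3 with hQ
  have hQval : ∀ r : ℝ, Q r = (r^2 - 0)*(r^3 - (1:ℝ)^3) - 3*r^3 := fun r => rfl
  have hQcont : Continuous Q := by
    apply Continuous.sub
    · exact ((continuous_pow 2).sub continuous_const).mul
        ((continuous_pow 3).sub continuous_const)
    · exact continuous_const.mul (continuous_pow 3)
  have hQ1 : Q 1 < 0 := by rw [hQval]; norm_num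
  have hQ2 : 0 < Q 2 := by rw [hQval]; norm_num
  obtain ⟨x₁, hx₁mem, hx₁⟩ := intermediate_value_Ioo (by norm_num : (1:ℝ) ≤ 2)
    hQcont.continuousOn ⟨hQ1, hQ2⟩
  have hQ_qeq : ∀ r : ℝ, Q r = 0 ↔ qeq 3 1 3 0 r := by
    intro r
    unfold qeq
    rw [hQval]
    constructor
    · intro h; linarith [h]
    · intro h; linarith [h]
  refine ⟨x₁, ?_⟩
  ext r
  simp only [RPset, Set.mem_setOf_eq, Finset.coe_singleton, Set.mem_singleton_iff]
  constructor
  · rintro ⟨hr, heq⟩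
    have hqeq : qeq 3 1 3 0 r := by unfold qeq; exact heq
    have hr1 : 1 < r := by
      by_contra hcon
      push_neg at hcon
      have h3 : r^3 ≤ 1 := pow_le_one₀ hr.le hcon
      have h3pos : 0 < r^3 := by positivity
      have : (r^2 - 0)*(r^3 - 1^3) ≤ 0 := by nlinarith
      rw [heq] at this
      nlinarith
    exact q_unique_big (by norm_num) (by norm_num) (by norm_num) hr1 hx₁mem.1 hqeq
      ((hQ_qeq x₁).mp hx₁)
  · rintro rfl
    exact ⟨by linarith [hx₁mem.1], (hQ_qeq r).mp hx₁⟩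

lemma mpw_RM : ∃ y₁ y₂ : ℝ, y₁ ≠ y₂ ∧ RMset 3 1 3 0 = ↑({y₁, y₂} : Finset ℝ) := by
  set C : ℝ → ℝ := fun r => r^3 - 3*r + 1 with hC
  have hCval : ∀ r : ℝ, C r = r^3 - 3*r + 1 := fun r => rfl
  have hCcont : Continuous C := by
    apply Continuous.add
    · exact (continuous_pow 3).sub (continuous_const.mul continuous_id)
    · exact continuous_const
  have hC0 : 0 < C 0 := by rw [hCval]; norm_num
  have hC1 : C 1 < 0 := by rw [hCval]; norm_num
  have hC2 : 0 < C 2 := by rw [hCval]; norm_num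
  obtain ⟨y₁, hy₁mem, hy₁⟩ := intermediate_value_Ioo' (by norm_num : (0:ℝ) ≤ 1)
    hCcont.continuousOn ⟨hC1, hC0⟩
  obtain ⟨y₂, hy₂mem, hy₂⟩ := intermediate_value_Ioo (by norm_num : (1:ℝ) ≤ 2)
    hCcont.continuousOn ⟨hC1, hC2⟩
  have hy12 : y₁ < y₂ := hy₁mem.2.trans hy₂mem.1
  have hmm : ∀ r : ℝ, 0 < r → ((r^2 - 0)*(r^3 + (1:ℝ)^3) = 3*r^3 ↔ C r = 0) := by
    intro r hr
    rw [hCval]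
    constructor
    · intro h
      have h2 : r^2 * (r^3 - 3*r + 1) = 0 := by nlinarith [h]
      rcases mul_eq_zero.mp h2 with h' | h'
      · exact absurd h' (by positivity)
      · exact h'
    · intro h
      nlinarith [h]
  refine ⟨y₁, y₂, hy12.ne, ?_⟩
  ext r
  simp only [RMset, Set.mem_setOf_eq, Finset.coe_insert, Finset.coe_singleton,
    Set.mem_insert_iff, Set.mem_singleton_iff]
  constructor
  · rintro ⟨hr, heq⟩
    have hCr : C r = 0 := (hmm r hr).mp heq
    by_contra hcon
    push_neg at hcon
    have key := cubic_three
    rcases lt_trichotomy r y₁ with h | h | h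
    · exact key r y₁ y₂ hr h hy12 (by rw [← hCval]; exact hCr) (by rw [← hCval]; exact hy₁)
        (by rw [← hCval]; exact hy₂)
    · exact hcon.1 h
    rcases lt_trichotomy r y₂ with h' | h' | h'
    · exact key y₁ r y₂ hy₁mem.1 h h' (by rw [← hCval]; exact hy₁) (by rw [← hCval]; exact hCr)
        (by rw [← hCval]; exact hy₂)
    · exact hcon.2 h'
    · exact key y₁ y₂ r hy₁mem.1 hy12 h' (by rw [← hCval]; exact hy₁)
        (by rw [← hCval]; exact hy₂) (by rw [← hCval]; exact hCr)
  · rintro (rfl | rfl)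
    · exact ⟨hy₁mem.1, (hmm r hy₁mem.1).mpr hy₁⟩
    · have hrpos : 0 < r := by linarith [hy₂mem.1]
      exact ⟨hrpos, (hmm r hrpos).mpr hy₂⟩
noncomputable def rhw (n : ℕ) : Fin (n+1) → ℂ :=
  fun j => if (j:ℕ) < n then ((1/2:ℝ):ℂ) * pom n ^ (j:ℕ) else 0

noncomputable def rhmu (n : ℕ) : Fin (n+1) → ℝ :=
  fun j => if (j:ℕ) < n then 1/(n:ℝ) else (1/2)^(4*n)

lemma rhw_inj {n : ℕ} (hn : 3 ≤ n) : Function.Injective (rhw n) := by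
  have hn0 : n ≠ 0 := by omega
  intro i j hij
  unfold rhw at hij
  have hexp : ∀ k : ℕ, ((1/2:ℝ):ℂ) * pom n ^ k ≠ 0 := by
    intro k
    apply mul_ne_zero
    · norm_num
    · exact pow_ne_zero _ ((pom_prim hn0).ne_zero hn0)
  by_cases hi : (i:ℕ) < n <;> by_cases hj : (j:ℕ) < n
  · rw [if_pos hi, if_pos hj] at hij
    have := (pom_prim hn0).pow_inj hi hj (mul_left_cancel₀ (by norm_num : ((1/2:ℝ):ℂ) ≠ 0) hij)
    exact Fin.ext this
  · rw [if_pos hi, if_neg hj] at hij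
    exact absurd hij (hexp _)
  · rw [if_neg hi, if_pos hj] at hij
    exact absurd hij.symm (hexp _)
  · exact Fin.ext (by omega)

lemma rhmu_pos {n : ℕ} (hn : 3 ≤ n) : ∀ j, 0 < rhmu n j := by
  intro j
  unfold rhmu
  by_cases hj : (j:ℕ) < n
  · rw [if_pos hj]
    positivity
  · rw [if_neg hj]
    positivity

lemma rhie_set_eq {n : ℕ} (hn : 3 ≤ n) :
    {x : ℂ | (∀ j, x ≠ rhw n j) ∧
      x - ∑ j, ((rhmu n j : ℝ) : ℂ) / ((starRingEnd ℂ) x - (starRingEnd ℂ) (rhw n j)) = 0}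
    = SolSet n (1/2) 1 ((1/2)^(4*n)) := by
  have hn0 : n ≠ 0 := by omega
  have hnc : (n:ℂ) ≠ 0 := Nat.cast_ne_zero.mpr hn0
  ext x
  simp only [Set.mem_setOf_eq, SolSet]
  -- sum formula under conditions
  have hsum : ∀ (hx0 : x ≠ 0) (hpow : x^n ≠ ((1/2:ℝ):ℂ)^n),
      (∑ j, ((rhmu n j : ℝ) : ℂ) / (x - rhw n j))
        = x^(n-1)/(x^n - ((1/2:ℝ):ℂ)^n) + (((1/2:ℝ)^(4*n) : ℝ):ℂ)/x := by
    intro hx0 hpow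
    rw [Fin.sum_univ_castSucc]
    have h1 : ∀ j : Fin n, ((rhmu n (Fin.castSucc j) : ℝ):ℂ) / (x - rhw n (Fin.castSucc j))
        = ((1/(n:ℝ) : ℝ):ℂ) * (x - ((1/2:ℝ):ℂ) * pom n ^ (j:ℕ))⁻¹ := by
      intro j
      have hj : ((Fin.castSucc j : Fin (n+1)):ℕ) = (j:ℕ) := rfl
      unfold rhmu rhw
      rw [hj, if_pos j.isLt, if_pos j.isLt, div_eq_mul_inv]
    rw [Finset.sum_congr rfl (fun j _ => h1 j)]
    have h2 : (∑ j : Fin n, ((1/(n:ℝ) : ℝ):ℂ) * (x - ((1/2:ℝ):ℂ) * pom n ^ (j:ℕ))⁻¹)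
        = ∑ j ∈ range n, ((1/(n:ℝ) : ℝ):ℂ) * (x - ((1/2:ℝ):ℂ) * pom n ^ j)⁻¹ :=
      Fin.sum_univ_eq_sum_range (fun j => ((1/(n:ℝ) : ℝ):ℂ) * (x - ((1/2:ℝ):ℂ) * pom n ^ j)⁻¹) n
    rw [h2, ← Finset.mul_sum, sum_inv_eq hn0 (1/2 : ℝ) hpow]
    have hlast1 : rhmu n (Fin.last n) = (1/2:ℝ)^(4*n) := by
      unfold rhmu
      rw [Fin.val_last, if_neg (lt_irrefl n)]
    have hlast2 : rhw n (Fin.last n) = 0 := by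
      unfold rhw
      rw [Fin.val_last, if_neg (lt_irrefl n)]
    rw [hlast1, hlast2, sub_zero]
    congr 1
    have hc : ((1/(n:ℝ) : ℝ):ℂ) = 1/(n:ℂ) := by push_cast; ring
    rw [hc]
    field_simp
  constructor
  · rintro ⟨hne, heq⟩
    have hx0 : x ≠ 0 := by
      have h := hne (Fin.last n)
      unfold rhw at h
      rwa [Fin.val_last, if_neg (lt_irrefl n)] at h
    have hpow : x^n ≠ ((1/2:ℝ):ℂ)^n := by
      intro hcon
      obtain ⟨j, hj, hx⟩ := (pow_eq_pow_iff hn0 (by norm_num : (0:ℝ) < 1/2)).mp hcon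
      refine hne ⟨j, by omega⟩ ?_
      unfold rhw
      simp only
      rw [if_pos (by simpa using hj)]
      exact hx
    refine ⟨hx0, hpow, ?_⟩
    have h2 := congrArg (starRingEnd ℂ) heq
    simp only [map_sub, map_sum, map_div₀, Complex.conj_conj, Complex.conj_ofReal,
      map_zero] at h2
    have hconj : (starRingEnd ℂ) x = ∑ j, ((rhmu n j : ℝ) : ℂ) / (x - rhw n j) :=
      sub_eq_zero.mp h2
    rw [hsum hx0 hpow] at hconj
    have hxp : x^(n-1) * x = x^n := by rw [← pow_succ]; congr 1; omega
    have hrhs : (x^(n-1)/(x^n - ((1/2:ℝ):ℂ)^n) + (((1/2:ℝ)^(4*n) : ℝ):ℂ)/x) * x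
        = x^n/(x^n - ((1/2:ℝ):ℂ)^n) + (((1/2:ℝ)^(4*n) : ℝ):ℂ) := by
      rw [add_mul, div_mul_eq_mul_div, hxp, div_mul_cancel₀ _ hx0]
    rw [Complex.ofReal_one, one_mul]
    calc (starRingEnd ℂ) x * x
        = (x^(n-1)/(x^n - ((1/2:ℝ):ℂ)^n) + (((1/2:ℝ)^(4*n) : ℝ):ℂ)/x) * x := by rw [hconj]
      _ = x^n/(x^n - ((1/2:ℝ):ℂ)^n) + (((1/2:ℝ)^(4*n) : ℝ):ℂ) := hrhs
  · rintro ⟨hx0, hpow, heqS⟩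
    have hne : ∀ j, x ≠ rhw n j := by
      intro j
      unfold rhw
      by_cases hj : (j:ℕ) < n
      · rw [if_pos hj]
        intro hcon
        exact hpow ((pow_eq_pow_iff hn0 (by norm_num : (0:ℝ) < 1/2)).mpr ⟨(j:ℕ), hj, hcon⟩)
      · rw [if_neg hj]
        exact hx0
    refine ⟨hne, ?_⟩
    rw [Complex.ofReal_one, one_mul] at heqS
    have hxp : x^(n-1) * x = x^n := by rw [← pow_succ]; congr 1; omega
    have hrhs : (x^(n-1)/(x^n - ((1/2:ℝ):ℂ)^n) + (((1/2:ℝ)^(4*n) : ℝ):ℂ)/x) * x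
        = x^n/(x^n - ((1/2:ℝ):ℂ)^n) + (((1/2:ℝ)^(4*n) : ℝ):ℂ) := by
      rw [add_mul, div_mul_eq_mul_div, hxp, div_mul_cancel₀ _ hx0]
    have hconj : (starRingEnd ℂ) x = ∑ j, ((rhmu n j : ℝ) : ℂ) / (x - rhw n j) := by
      rw [hsum hx0 hpow]
      apply mul_right_cancel₀ hx0
      rw [hrhs, heqS]
    have h2 : (starRingEnd ℂ) x - ∑ j, ((rhmu n j : ℝ) : ℂ) / (x - rhw n j) = 0 :=
      sub_eq_zero.mpr hconj
    have h3 := congrArg (starRingEnd ℂ) h2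
    simpa only [map_sub, map_sum, map_div₀, Complex.conj_conj, Complex.conj_ofReal,
      map_zero] using h3
noncomputable def mpww : Fin 3 → ℂ := fun j => pom 3 ^ (j:ℕ)
def mpwmu : Fin 3 → ℝ := fun _ => 1

lemma mpww_inj : Function.Injective mpww := by
  have h30 : (3:ℕ) ≠ 0 := by norm_num
  intro i j hij
  exact Fin.ext ((pom_prim h30).pow_inj i.isLt j.isLt hij)

lemma mpw_zero_sum : (0:ℂ) - ∑ j, ((mpwmu j : ℝ) : ℂ) /
    ((starRingEnd ℂ) 0 - (starRingEnd ℂ) (mpww j)) = 0 := by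
  have h30 : (3:ℕ) ≠ 0 := by norm_num
  set c : ℂ := (starRingEnd ℂ) (pom 3) with hcdef
  have hc3 : c^3 = 1 := by rw [hcdef, ← map_pow, (pom_prim h30).pow_eq_one, map_one]
  have hcne1 : c⁻¹ ≠ 1 := by
    simp only [ne_eq, inv_eq_one]
    intro h
    have h2 := congrArg (starRingEnd ℂ) h
    rw [hcdef, Complex.conj_conj, map_one] at h2
    exact (pom_prim h30).ne_one (by norm_num) h2
  have hgeom : (1:ℂ) + c⁻¹ + (c⁻¹)^2 = 0 := by
    have h := geom_sum_eq hcne1 3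
    have h2 : (c⁻¹)^3 = 1 := by rw [inv_pow, hc3, inv_one]
    rw [h2, sub_self, zero_div] at h
    simp only [Finset.sum_range_succ, Finset.sum_range_zero, pow_zero, pow_one, zero_add] at h
    linear_combination h
  have hv0 : (starRingEnd ℂ) (mpww 0) = 1 := by
    unfold mpww
    rw [show ((0 : Fin 3):ℕ) = 0 from rfl, pow_zero, map_one]
  have hv1 : (starRingEnd ℂ) (mpww 1) = c := by
    unfold mpww
    rw [show ((1 : Fin 3):ℕ) = 1 from rfl, pow_one, hcdef]
  have hv2 : (starRingEnd ℂ) (mpww 2) = c^2 := by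
    unfold mpww
    rw [show ((2 : Fin 3):ℕ) = 2 from rfl, map_pow, hcdef]
  have hmu : ∀ j : Fin 3, ((mpwmu j : ℝ) : ℂ) = 1 := by
    intro j
    unfold mpwmu
    norm_num
  rw [Fin.sum_univ_three, hmu, hmu, hmu, hv0, hv1, hv2, map_zero]
  have e1 : (1:ℂ)/((0:ℂ) - 1) = -1 := by norm_num
  have e2 : (1:ℂ)/((0:ℂ) - c) = -(c⁻¹) := by rw [zero_sub, one_div, inv_neg]
  have e3 : (1:ℂ)/((0:ℂ) - c^2) = -((c⁻¹)^2) := by rw [zero_sub, one_div, inv_neg, inv_pow]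
  rw [e1, e2, e3]
  linear_combination hgeom

lemma mpw_set_eq :
    {x : ℂ | (∀ j, x ≠ mpww j) ∧
      x - ∑ j, ((mpwmu j : ℝ) : ℂ) / ((starRingEnd ℂ) x - (starRingEnd ℂ) (mpww j)) = 0}
    = insert (0:ℂ) (SolSet 3 1 3 0) := by
  have h30 : (3:ℕ) ≠ 0 := by norm_num
  ext x
  simp only [Set.mem_setOf_eq, Set.mem_insert_iff, SolSet]
  by_cases hx0 : x = 0
  · subst hx0
    constructor
    · intro _
      exact Or.inl rfl
    · intro _
      refine ⟨?_, mpw_zero_sum⟩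
      intro j
      unfold mpww
      exact (pow_ne_zero _ ((pom_prim h30).ne_zero h30)).symm
  · -- x ≠ 0
    have hsum : ∀ (hpow : x^3 ≠ ((1:ℝ):ℂ)^3),
        (∑ j, ((mpwmu j : ℝ) : ℂ) / (x - mpww j))
          = ((3:ℕ):ℂ) * x^(3-1)/(x^3 - ((1:ℝ):ℂ)^3) := by
      intro hpow
      have hstep : ∀ j : Fin 3, ((mpwmu j : ℝ):ℂ)/(x - mpww j)
          = (x - ((1:ℝ):ℂ) * pom 3 ^ (j:ℕ))⁻¹ := by
        intro j
        unfold mpwmu mpww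
        rw [Complex.ofReal_one, one_mul, one_div]
      rw [Finset.sum_congr rfl (fun j _ => hstep j)]
      rw [Fin.sum_univ_eq_sum_range (fun j => (x - ((1:ℝ):ℂ) * pom 3 ^ j)⁻¹) 3]
      exact sum_inv_eq h30 (1:ℝ) hpow
    constructor
    · rintro ⟨hne, heq⟩
      have hpow : x^3 ≠ ((1:ℝ):ℂ)^3 := by
        intro hcon
        obtain ⟨j, hj, hx⟩ := (pow_eq_pow_iff h30 one_pos).mp hcon
        refine hne ⟨j, hj⟩ ?_
        unfold mpww
        rw [hx, Complex.ofReal_one, one_mul]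
      refine Or.inr ⟨hx0, hpow, ?_⟩
      have h2 := congrArg (starRingEnd ℂ) heq
      simp only [map_sub, map_sum, map_div₀, Complex.conj_conj, Complex.conj_ofReal,
        map_zero] at h2
      have hconj : (starRingEnd ℂ) x = ∑ j, ((mpwmu j : ℝ) : ℂ) / (x - mpww j) :=
        sub_eq_zero.mp h2
      rw [hsum hpow] at hconj
      have hxp : x^(3-1) * x = x^3 := by ring
      have hrhs : (((3:ℕ):ℂ) * x^(3-1)/(x^3 - ((1:ℝ):ℂ)^3)) * x
          = ((3:ℕ):ℂ) * x^3/(x^3 - ((1:ℝ):ℂ)^3) := by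
        rw [div_mul_eq_mul_div, mul_assoc, hxp]
      have hfin : (starRingEnd ℂ) x * x = ((3:ℕ):ℂ) * x^3/(x^3 - ((1:ℝ):ℂ)^3) := by
        rw [hconj, hrhs]
      rw [hfin]
      push_cast
      ring
    · rintro (h | ⟨hx0', hpow, heqS⟩)
      · exact absurd h hx0
      have hne : ∀ j, x ≠ mpww j := by
        intro j hcon
        apply hpow
        have : mpww j = ((1:ℝ):ℂ) * pom 3 ^ (j:ℕ) := by
          unfold mpww
          rw [Complex.ofReal_one, one_mul]
        exact (pow_eq_pow_iff h30 one_pos).mpr ⟨(j:ℕ), j.isLt, by rw [hcon, this]⟩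
      refine ⟨hne, ?_⟩
      have hxp : x^(3-1) * x = x^3 := by ring
      have hrhs : (((3:ℕ):ℂ) * x^(3-1)/(x^3 - ((1:ℝ):ℂ)^3)) * x
          = ((3:ℕ):ℂ) * x^3/(x^3 - ((1:ℝ):ℂ)^3) := by
        rw [div_mul_eq_mul_div, mul_assoc, hxp]
      have hconj : (starRingEnd ℂ) x = ∑ j, ((mpwmu j : ℝ) : ℂ) / (x - mpww j) := by
        rw [hsum hpow]
        apply mul_right_cancel₀ hx0
        rw [hrhs, heqS]
        push_cast
        ring
      have h2 : (starRingEnd ℂ) x - ∑ j, ((mpwmu j : ℝ) : ℂ) / (x - mpww j) = 0 :=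
        sub_eq_zero.mpr hconj
      have h3 := congrArg (starRingEnd ℂ) h2
      simpa only [map_sub, map_sum, map_div₀, Complex.conj_conj, Complex.conj_ofReal,
        map_zero] using h3
/-- for every `n ≥ 2` there is a zero-shear lens on `n + 1` point
masses and a source `ζ` attaining the Khavinson–Neumann bound of
`5(n+1) - 5 = 5n` images. -/
theorem maximal_lens_exists
    (n : ℕ) (hn : 2 ≤ n) :
    ∃ (w : Fin (n + 1) → ℂ) (μ : Fin (n + 1) → ℝ) (ζ : ℂ),
      Function.Injective w ∧ (∀ j, 0 < μ j) ∧
      {x : ℂ | (∀ j, x ≠ w j) ∧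
          x - ∑ j, (μ j : ℂ) / ((starRingEnd ℂ) x - (starRingEnd ℂ) (w j)) = ζ}.Finite ∧
      {x : ℂ | (∀ j, x ≠ w j) ∧
          x - ∑ j, (μ j : ℂ) / ((starRingEnd ℂ) x - (starRingEnd ℂ) (w j)) = ζ}.ncard
        = 5 * n := by
  rcases Nat.lt_or_ge n 3 with h3 | h3
  · -- n = 2 : Mao–Petters–Witt equilateral triangle lens
    obtain rfl : n = 2 := by omega
    have h30 : (3:ℕ) ≠ 0 := by norm_num
    obtain ⟨x₁, hRP⟩ := mpw_RP
    obtain ⟨y₁, y₂, hy12, hRM⟩ := mpw_RM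
    have hcard := SolSet_card h30 (by norm_num : (0:ℝ) < 1) (by norm_num : (0:ℝ) < 3) hRP hRM
    have hc2 : ({y₁, y₂} : Finset ℝ).card = 2 := by
      rw [Finset.card_insert_of_notMem (by simpa using hy12), Finset.card_singleton]
    have h0nin : (0:ℂ) ∉ SolSet 3 1 3 0 := fun h => h.1 rfl
    refine ⟨mpww, mpwmu, 0, mpww_inj, fun j => by unfold mpwmu; norm_num, ?_, ?_⟩
    · rw [mpw_set_eq]
      exact hcard.1.insert 0
    · rw [mpw_set_eq, Set.ncard_insert_of_notMem h0nin hcard.1, hcard.2,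
        Finset.card_singleton, hc2]
  · -- n ≥ 3 : Rhie's configuration
    have hn0 : n ≠ 0 := by omega
    obtain ⟨x₁, x₂, hx12, hRP⟩ := rhie_RP h3
    obtain ⟨y₁, y₂, y₃, h12, h13, h23, hRM⟩ := rhie_RM h3
    have hcard := SolSet_card hn0 (by norm_num : (0:ℝ) < 1/2) (by norm_num : (0:ℝ) < 1)
      hRP hRM
    have hc2 : ({x₁, x₂} : Finset ℝ).card = 2 := by
      rw [Finset.card_insert_of_notMem (by simpa using hx12), Finset.card_singleton]
    have hc3 : ({y₁, y₂, y₃} : Finset ℝ).card = 3 := by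
      rw [Finset.card_insert_of_notMem (by simp [h12, h13]),
        Finset.card_insert_of_notMem (by simpa using h23), Finset.card_singleton]
    refine ⟨rhw n, rhmu n, 0, rhw_inj h3, rhmu_pos h3, ?_, ?_⟩
    · rw [rhie_set_eq h3]
      exact hcard.1
    · rw [rhie_set_eq h3, hcard.2, hc2, hc3]
      ring
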